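/- For every nonnegative initial datum ω₀ = (B(0), N_s(0), N_m(0), N_p(0), N_{m.p}(0)) ∈ ℝ⁵₊ there exists a unique global-in-time solution t ↦ (B(t), N_s(t), N_m(t), N_p(t), N_{m.p}(t)) of the within-host bacterial dynamics system, defined for all t ∈ [0,∞), taking the value ω₀ at t = 0, and all five components of this solution remain nonnegative for all t ≥ 0. -/

import Mathlib

open Filter Set Matrix

/-- Parameters of the within-host bacterial dynamics system:
`Lam` = Λ (nutrient inflow), `d` = nutrient washout rate, `ds,dm,dp,dmp` = death
rates `d_j`, `bs,bm,bp,bmp` = consumption rates `β_j`, `ts,tm,tp,tmp` = conversion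
factors `τ_j`, `es,em,ep,emp` = mutation ratios `ε_j`, `th` = segregation ratio θ,
`al` = HGT flux α, and `aH, bH` the Beddington–DeAngelis constants. -/
structure ModelParams where
  Lam : ℝ
  d : ℝ
  ds : ℝ
  dm : ℝ
  dp : ℝ
  dmp : ℝ
  bs : ℝ
  bm : ℝ
  bp : ℝ
  bmp : ℝ
  ts : ℝ
  tm : ℝ
  tp : ℝ
  tmp : ℝ
  es : ℝ
  em : ℝ
  ep : ℝ
  emp : ℝ
  th : ℝ
  al : ℝ
  aH : ℝ
  bH : ℝ

/-- Right-hand side of the ODE system, with state `x = (B, N_s, N_m, N_p, N_{m.p})`. -/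
noncomputable def rhs (p : ModelParams) (x : Fin 5 → ℝ) : Fin 5 → ℝ :=
  ![p.Lam - p.d * x 0 - x 0 * (p.bs * x 1 + p.bm * x 2 + p.bp * x 3 + p.bmp * x 4),
    p.ts * p.bs * (1 - p.es) * x 0 * x 1 - p.ds * x 1 + p.em * p.tm * p.bm * x 0 * x 2
      + p.th * p.tp * p.bp * x 0 * x 3
      - (p.al / (p.aH + p.bH * (x 1 + x 2 + x 3 + x 4))) * x 1 * (x 3 + x 4),
    p.tm * p.bm * (1 - p.em) * x 0 * x 2 - p.dm * x 2 + p.es * p.ts * p.bs * x 0 * x 1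
      + p.th * p.tmp * p.bmp * x 0 * x 4
      - (p.al / (p.aH + p.bH * (x 1 + x 2 + x 3 + x 4))) * x 2 * (x 3 + x 4),
    p.tp * p.bp * (1 - p.th) * (1 - p.ep) * x 0 * x 3 - p.dp * x 3
      + p.emp * (1 - p.th) * p.tmp * p.bmp * x 0 * x 4
      + (p.al / (p.aH + p.bH * (x 1 + x 2 + x 3 + x 4))) * x 1 * (x 3 + x 4),
    p.tmp * p.bmp * (1 - p.th) * (1 - p.emp) * x 0 * x 4 - p.dmp * x 4
      + p.ep * (1 - p.th) * p.tp * p.bp * x 0 * x 3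
      + (p.al / (p.aH + p.bH * (x 1 + x 2 + x 3 + x 4))) * x 2 * (x 3 + x 4)]

/-- Natural hypotheses on the parameters. -/
def ModelParams.Valid (p : ModelParams) : Prop :=
  0 < p.Lam ∧ 0 < p.d ∧ 0 < p.ds ∧ 0 < p.dm ∧ 0 < p.dp ∧ 0 < p.dmp ∧
  0 ≤ p.bs ∧ 0 ≤ p.bm ∧ 0 ≤ p.bp ∧ 0 ≤ p.bmp ∧
  0 ≤ p.ts ∧ 0 ≤ p.tm ∧ 0 ≤ p.tp ∧ 0 ≤ p.tmp ∧
  p.es ∈ Set.Ioo (0:ℝ) 1 ∧ p.em ∈ Set.Ioo (0:ℝ) 1 ∧ p.ep ∈ Set.Ioo (0:ℝ) 1 ∧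
  p.emp ∈ Set.Ioo (0:ℝ) 1 ∧ p.th ∈ Set.Ioo (0:ℝ) 1 ∧
  0 ≤ p.al ∧ 0 ≤ p.aH ∧ 0 ≤ p.bH ∧ 0 < p.aH + p.bH

/-- `x : ℝ → Fin 5 → ℝ` is a global-in-time (for `t ≥ 0`) solution of the system. -/
noncomputable def IsSolution (p : ModelParams) (x : ℝ → Fin 5 → ℝ) : Prop :=
  ∀ t : ℝ, 0 ≤ t → ∀ i : Fin 5, HasDerivAt (fun s => x s i) (rhs p (x t) i) t



section Aux

/-- Barrier lemma: if `f 0 ≤ M` and the derivative is nonpositive whenever `f ≥ M`,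
then `f ≤ M` on `[0, b]`. -/
lemma barrier {f g : ℝ → ℝ} {b M : ℝ}
    (hd : ∀ t ∈ Icc (0:ℝ) b, HasDerivAt f (g t) t)
    (h0 : f 0 ≤ M)
    (hstep : ∀ t ∈ Icc (0:ℝ) b, M ≤ f t → g t ≤ 0) :
    ∀ t ∈ Icc (0:ℝ) b, f t ≤ M := by
  by_contra hcon
  push_neg at hcon
  obtain ⟨t₁, ht₁, ht₁M⟩ := hcon
  have hb : (0:ℝ) ≤ b := ht₁.1.trans ht₁.2
  set A : Set ℝ := {t ∈ Icc (0:ℝ) t₁ | f t ≤ M} with hA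
  have h0A : (0:ℝ) ∈ A := ⟨⟨le_refl _, ht₁.1⟩, h0⟩
  have hAne : A.Nonempty := ⟨0, h0A⟩
  have hAbdd : BddAbove A := ⟨t₁, fun u hu => hu.1.2⟩
  have hsubset : Icc (0:ℝ) t₁ ⊆ Icc (0:ℝ) b := Icc_subset_Icc le_rfl ht₁.2
  have hcont : ContinuousOn f (Icc (0:ℝ) t₁) := fun u hu =>
    ((hd u (hsubset hu)).continuousAt).continuousWithinAt
  have hAclosed : IsClosed A := by
    have : A = Icc (0:ℝ) t₁ ∩ f ⁻¹' (Iic M) := by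
      ext u; simp only [hA, mem_sep_iff, mem_inter_iff, mem_preimage, mem_Iic]
    rw [this]
    exact (hcont.preimage_isClosed_of_isClosed isClosed_Icc isClosed_Iic)
  set s := sSup A with hs
  have hsA : s ∈ A := hAclosed.csSup_mem hAne hAbdd
  have hst₁ : s ≤ t₁ := csSup_le hAne fun u hu => hu.1.2
  have hs0 : (0:ℝ) ≤ s := le_csSup hAbdd h0A
  have hfsM : f s ≤ M := hsA.2
  have hslt : s < t₁ := lt_of_le_of_ne hst₁ (fun h => by rw [h] at hfsM; linarith)
  have hgt : ∀ u ∈ Ioc s t₁, M < f u := by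
    intro u hu
    by_contra hle
    push_neg at hle
    have : u ∈ A := ⟨⟨hs0.trans hu.1.le, hu.2⟩, hle⟩
    exact absurd (le_csSup hAbdd this) (not_le.2 hu.1)
  have hanti : AntitoneOn f (Icc s t₁) := by
    apply antitoneOn_of_deriv_nonpos (convex_Icc s t₁)
    · exact fun u hu => ((hd u (hsubset ⟨hs0.trans hu.1, hu.2⟩)).continuousAt).continuousWithinAt
    · intro u hu
      rw [interior_Icc] at hu
      exact ((hd u (hsubset ⟨hs0.trans hu.1.le, hu.2.le⟩)).differentiableAt).differentiableWithinAt
    · intro u hu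
      rw [interior_Icc] at hu
      have hu' : u ∈ Icc (0:ℝ) b := hsubset ⟨hs0.trans hu.1.le, hu.2.le⟩
      have := hgt u ⟨hu.1, hu.2.le⟩
      rw [(hd u hu').deriv]
      exact hstep u hu' this.le
  have : f t₁ ≤ f s := hanti ⟨le_rfl, hst₁⟩ ⟨hst₁, le_rfl⟩ hslt.le
  linarith

/-- key ratio bound: `a / (aH + bH * N) ≤ max 1 (4R) / (aH + bH)` when `0 ≤ a ≤ N` and `a ≤ 4R`. -/
lemma ratio_le {aH bH R a N : ℝ} (haH : 0 ≤ aH) (hbH : 0 ≤ bH) (hc : 0 < aH + bH)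
    (ha0 : 0 ≤ a) (haN : a ≤ N) (haR : a ≤ 4*R) :
    a / (aH + bH * N) ≤ max 1 (4*R) / (aH + bH) := by
  set M := max 1 (4*R) with hM
  have hM1 : (1:ℝ) ≤ M := le_max_left _ _
  have hMR : 4*R ≤ M := le_max_right _ _
  have hN0 : 0 ≤ N := ha0.trans haN
  have hD0 : 0 ≤ aH + bH * N := by positivity
  rcases hD0.lt_or_eq with hD | hD
  · rw [div_le_div_iff₀ hD hc]
    have h1 : a * aH ≤ M * aH := mul_le_mul_of_nonneg_right (haR.trans hMR) haH
    have h2 : a * bH ≤ M * N * bH := by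
      have : a ≤ M * N := haN.trans (le_mul_of_one_le_left hN0 hM1)
      exact mul_le_mul_of_nonneg_right this hbH
    nlinarith
  · rw [← hD]
    have haz : a = 0 := by
      rcases hbH.lt_or_eq with hb | hb
      · nlinarith
      · nlinarith
    simp [haz]
    positivity

set_option maxHeartbeats 1000000 in
/-- Lipschitz-type bound for the HGT (Beddington–DeAngelis) term, asymmetric version. -/
lemma qlip_aux {aH bH al R u um uN v vm vN d : ℝ}
    (haH : 0 ≤ aH) (hbH : 0 ≤ bH) (hal : 0 ≤ al) (hc : 0 < aH + bH) (hR : 0 ≤ R)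
    (hu0 : 0 ≤ u) (huN : u ≤ uN) (huR : u ≤ 4*R)
    (hum0 : 0 ≤ um) (humN : um ≤ uN) (humR : um ≤ 4*R)
    (hv0 : 0 ≤ v) (hvN : v ≤ vN) (hvR : v ≤ 4*R)
    (hvm0 : 0 ≤ vm) (hvmN : vm ≤ vN) (hvmR : vm ≤ 4*R)
    (hDle : aH + bH * vN ≤ aH + bH * uN)
    (hd : |u - v| ≤ d) (hdm : |um - vm| ≤ d + d) (hdN : |uN - vN| ≤ 4*d) :
    |al/(aH + bH*uN) * u * um - al/(aH + bH*vN) * v * vm|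
      ≤ 7 * al * (max 1 (4*R)/(aH+bH)) * d := by
  set M := max 1 (4*R) with hM
  set Mq := M / (aH + bH) with hMq
  have hd0 : 0 ≤ d := (abs_nonneg _).trans hd
  have hM1 : (1:ℝ) ≤ M := le_max_left _ _
  have hMq0 : 0 ≤ Mq := by positivity
  set Du := aH + bH * uN with hDu
  set Dv := aH + bH * vN with hDv
  have huN0 : 0 ≤ uN := hu0.trans huN
  have hvN0 : 0 ≤ vN := hv0.trans hvN
  have hDu0 : 0 ≤ Du := by positivity
  have hDv0 : 0 ≤ Dv := by positivity
  have hratio_u : um / Du ≤ Mq := ratio_le haH hbH hc hum0 humN humR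
  rcases hDv0.lt_or_eq with hDv' | hDv'
  · -- both denominators positive
    have hDu' : 0 < Du := lt_of_lt_of_le hDv' hDle
    have key : al/Du * u * um - al/Dv * v * vm
        = al * ((u - v) * (um/Du) + v * ((um - vm)/Du) + (v * vm) * ((Dv - Du)/(Du*Dv))) := by
      field_simp
      ring
    have hvDv : v / Dv ≤ Mq := ratio_le haH hbH hc hv0 hvN hvR
    have hvDu : v / Du ≤ Mq := le_trans (div_le_div_of_nonneg_left hv0 hDv' hDle) hvDv
    have hvmbH : vm * bH ≤ Du := by
      calc vm * bH ≤ vN * bH := mul_le_mul_of_nonneg_right hvmN hbH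
      _ ≤ Dv := by rw [hDv]; nlinarith
      _ ≤ Du := hDle
    have habsD : |Dv - Du| ≤ bH * (4*d) := by
      have h : Dv - Du = bH * (vN - uN) := by rw [hDu, hDv]; ring
      rw [h, abs_mul, abs_of_nonneg hbH]
      exact mul_le_mul_of_nonneg_left (by rwa [abs_sub_comm]) hbH
    -- bound each of the three terms
    have t1 : |(u - v) * (um/Du)| ≤ d * Mq := by
      rw [abs_mul]
      apply mul_le_mul hd (by rwa [abs_of_nonneg (by positivity)]) (abs_nonneg _) hd0
    have t2 : |v * ((um - vm)/Du)| ≤ Mq * (d + d) := by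
      have h : |v * ((um - vm)/Du)| = v/Du * |um - vm| := by
        rw [abs_mul, abs_div, abs_of_nonneg hv0, abs_of_nonneg hDu0]
        ring
      rw [h]
      exact mul_le_mul hvDu hdm (abs_nonneg _) hMq0
    have t3 : |(v * vm) * ((Dv - Du)/(Du*Dv))| ≤ Mq * (4*d) := by
      have h1 : |(v * vm) * ((Dv - Du)/(Du*Dv))| = (v/Dv) * ((vm * |Dv - Du|)/Du) := by
        rw [abs_mul, abs_div, abs_mul, abs_of_nonneg hv0, abs_of_nonneg hvm0,
          abs_of_nonneg (mul_nonneg hDu0 hDv0)]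
        field_simp
      rw [h1]
      have h2 : (vm * |Dv - Du|)/Du ≤ 4*d := by
        rw [div_le_iff₀ hDu']
        calc vm * |Dv - Du| ≤ vm * (bH*(4*d)) := mul_le_mul_of_nonneg_left habsD hvm0
        _ = (vm * bH) * (4*d) := by ring
        _ ≤ Du * (4*d) := mul_le_mul_of_nonneg_right hvmbH (by positivity)
        _ = 4*d*Du := by ring
      exact mul_le_mul hvDv h2 (by positivity) hMq0
    rw [key]
    have tri : |(u - v) * (um/Du) + v * ((um - vm)/Du) + (v * vm) * ((Dv - Du)/(Du*Dv))|
        ≤ d * Mq + Mq * (d + d) + Mq * (4*d) :=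
      le_trans (abs_add_le _ _) (add_le_add (le_trans (abs_add_le _ _) (add_le_add t1 t2)) t3)
    calc |al * ((u - v) * (um/Du) + v * ((um - vm)/Du) + (v * vm) * ((Dv - Du)/(Du*Dv)))|
        = al * |(u - v) * (um/Du) + v * ((um - vm)/Du) + (v * vm) * ((Dv - Du)/(Du*Dv))| := by
          rw [abs_mul, abs_of_nonneg hal]
    _ ≤ al * (d * Mq + Mq * (d + d) + Mq * (4*d)) := mul_le_mul_of_nonneg_left tri hal
    _ = 7 * al * Mq * d := by ring
  · -- Dv = 0 : then aH = 0, bH * vN = 0, and since aH + bH > 0, vN = 0, so v = vm = 0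
    have hbv0 : 0 ≤ bH * vN := mul_nonneg hbH hvN0
    have hDz : aH + bH * vN = 0 := by rw [← hDv]; exact hDv'.symm
    have haH0 : aH = 0 := by linarith
    have hbH' : 0 < bH := by rw [haH0] at hc; simpa using hc
    have hvN' : vN = 0 := by
      have h : bH * vN = 0 := by linarith
      exact (mul_eq_zero.1 h).resolve_left hbH'.ne'
    have hv' : v = 0 := le_antisymm (by rw [hvN'] at hvN; exact hvN) hv0
    have hvm' : vm = 0 := le_antisymm (by rw [hvN'] at hvmN; exact hvmN) hvm0
    rw [hv', hvm']
    simp only [mul_zero, sub_zero]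
    have hud : u ≤ d := by
      rw [hv'] at hd
      calc u = |u - 0| := by rw [sub_zero, abs_of_nonneg hu0]
      _ ≤ d := hd
    have : |al/Du * u * um| = al/Du * u * um := by
      apply abs_of_nonneg; positivity
    rw [this]
    have h1 : al/Du * u * um = al * u * (um/Du) := by ring
    rw [h1]
    have step1 : al * u * (um/Du) ≤ (al * d) * Mq :=
      mul_le_mul (mul_le_mul_of_nonneg_left hud hal) hratio_u
        (div_nonneg hum0 hDu0) (mul_nonneg hal hd0)
    have step2 : (al * d) * Mq ≤ 7 * al * Mq * d := by
      nlinarith [mul_nonneg (mul_nonneg hal hMq0) hd0]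
    linarith

/-- symmetric version of `qlip_aux`. -/
lemma qlip {aH bH al R u um uN v vm vN d : ℝ}
    (haH : 0 ≤ aH) (hbH : 0 ≤ bH) (hal : 0 ≤ al) (hc : 0 < aH + bH) (hR : 0 ≤ R)
    (hu0 : 0 ≤ u) (huN : u ≤ uN) (huR : u ≤ 4*R)
    (hum0 : 0 ≤ um) (humN : um ≤ uN) (humR : um ≤ 4*R)
    (hv0 : 0 ≤ v) (hvN : v ≤ vN) (hvR : v ≤ 4*R)
    (hvm0 : 0 ≤ vm) (hvmN : vm ≤ vN) (hvmR : vm ≤ 4*R)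
    (hd : |u - v| ≤ d) (hdm : |um - vm| ≤ d + d) (hdN : |uN - vN| ≤ 4*d) :
    |al/(aH + bH*uN) * u * um - al/(aH + bH*vN) * v * vm|
      ≤ 7 * al * (max 1 (4*R)/(aH+bH)) * d := by
  rcases le_total (aH + bH * vN) (aH + bH * uN) with h | h
  · exact qlip_aux haH hbH hal hc hR hu0 huN huR hum0 humN humR hv0 hvN hvR hvm0 hvmN hvmR h
      hd hdm hdN
  · rw [abs_sub_comm]
    exact qlip_aux haH hbH hal hc hR hv0 hvN hvR hvm0 hvmN hvmR hu0 huN huR hum0 humN humR h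
      (abs_sub_comm u v ▸ hd) (abs_sub_comm um vm ▸ hdm) (abs_sub_comm uN vN ▸ hdN)


lemma abs_term_le {k a b d : ℝ} (h : |a - b| ≤ d) : |k*(a-b)| ≤ |k| *d := by
  rw [abs_mul]
  exact mul_le_mul_of_nonneg_left h (abs_nonneg k)

lemma abs_sum7_le {t1 t2 t3 t4 t5 t6 t7 b1 b2 b3 b4 b5 b6 b7 : ℝ}
    (h1 : |t1| ≤ b1) (h2 : |t2| ≤ b2) (h3 : |t3| ≤ b3) (h4 : |t4| ≤ b4)
    (h5 : |t5| ≤ b5) (h6 : |t6| ≤ b6) (h7 : |t7| ≤ b7) :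
    |t1+t2+t3+t4+t5+t6+t7| ≤ b1+b2+b3+b4+b5+b6+b7 := by
  have a1 := abs_add_le (t1+t2+t3+t4+t5+t6) t7
  have a2 := abs_add_le (t1+t2+t3+t4+t5) t6
  have a3 := abs_add_le (t1+t2+t3+t4) t5
  have a4 := abs_add_le (t1+t2+t3) t4
  have a5 := abs_add_le (t1+t2) t3
  have a6 := abs_add_le t1 t2
  linarith

/-- Lipschitz bound for the polynomial part of each component of the vector field. -/
lemma comp_lip {R d k0 k1 k2 k3 k4 l1 l2 l3 l4 x0 x1 x2 x3 x4 y0 y1 y2 y3 y4 : ℝ}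
    (hx00 : 0 ≤ x0) (hx0R : x0 ≤ R)
    (hy10 : 0 ≤ y1) (hy1R : y1 ≤ R) (hy20 : 0 ≤ y2) (hy2R : y2 ≤ R)
    (hy30 : 0 ≤ y3) (hy3R : y3 ≤ R) (hy40 : 0 ≤ y4) (hy4R : y4 ≤ R)
    (h0 : |x0 - y0| ≤ d) (h1 : |x1 - y1| ≤ d) (h2 : |x2 - y2| ≤ d)
    (h3 : |x3 - y3| ≤ d) (h4 : |x4 - y4| ≤ d) :
    |(k0*x0 + k1*x1 + k2*x2 + k3*x3 + k4*x4 + x0*(l1*x1+l2*x2+l3*x3+l4*x4))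
      - (k0*y0 + k1*y1 + k2*y2 + k3*y3 + k4*y4 + y0*(l1*y1+l2*y2+l3*y3+l4*y4))|
      ≤ ((|k0|+|k1|+|k2|+|k3|+|k4|) + 2*R*(|l1|+|l2|+|l3|+|l4|)) * d := by
  have hd0 : 0 ≤ d := (abs_nonneg _).trans h0
  have hR : 0 ≤ R := hy10.trans hy1R
  have key : (k0*x0 + k1*x1 + k2*x2 + k3*x3 + k4*x4 + x0*(l1*x1+l2*x2+l3*x3+l4*x4))
      - (k0*y0 + k1*y1 + k2*y2 + k3*y3 + k4*y4 + y0*(l1*y1+l2*y2+l3*y3+l4*y4))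
      = k0*(x0-y0) + k1*(x1-y1) + k2*(x2-y2) + k3*(x3-y3) + k4*(x4-y4)
        + x0*(l1*(x1-y1)+l2*(x2-y2)+l3*(x3-y3)+l4*(x4-y4))
        + (l1*y1+l2*y2+l3*y3+l4*y4)*(x0-y0) := by ring
  rw [key]
  have hLd : |l1*(x1-y1)+l2*(x2-y2)+l3*(x3-y3)+l4*(x4-y4)| ≤ (|l1|+|l2|+|l3|+|l4|)*d := by
    have b1 := abs_term_le (k := l1) h1
    have b2 := abs_term_le (k := l2) h2
    have b3 := abs_term_le (k := l3) h3
    have b4 := abs_term_le (k := l4) h4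
    have c1 := abs_add_le (l1*(x1-y1)+l2*(x2-y2)+l3*(x3-y3)) (l4*(x4-y4))
    have c2 := abs_add_le (l1*(x1-y1)+l2*(x2-y2)) (l3*(x3-y3))
    have c3 := abs_add_le (l1*(x1-y1)) (l2*(x2-y2))
    linarith
  have hLy : |l1*y1+l2*y2+l3*y3+l4*y4| ≤ (|l1|+|l2|+|l3|+|l4|)*R := by
    have b1 : |l1*y1| ≤ |l1| *R := by
      rw [abs_mul, abs_of_nonneg hy10]; exact mul_le_mul_of_nonneg_left hy1R (abs_nonneg _)
    have b2 : |l2*y2| ≤ |l2| *R := by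
      rw [abs_mul, abs_of_nonneg hy20]; exact mul_le_mul_of_nonneg_left hy2R (abs_nonneg _)
    have b3 : |l3*y3| ≤ |l3| *R := by
      rw [abs_mul, abs_of_nonneg hy30]; exact mul_le_mul_of_nonneg_left hy3R (abs_nonneg _)
    have b4 : |l4*y4| ≤ |l4| *R := by
      rw [abs_mul, abs_of_nonneg hy40]; exact mul_le_mul_of_nonneg_left hy4R (abs_nonneg _)
    have c1 := abs_add_le (l1*y1+l2*y2+l3*y3) (l4*y4)
    have c2 := abs_add_le (l1*y1+l2*y2) (l3*y3)
    have c3 := abs_add_le (l1*y1) (l2*y2)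
    linarith
  have t6 : |x0*(l1*(x1-y1)+l2*(x2-y2)+l3*(x3-y3)+l4*(x4-y4))| ≤ R*((|l1|+|l2|+|l3|+|l4|)*d) := by
    rw [abs_mul, abs_of_nonneg hx00]
    exact mul_le_mul hx0R hLd (abs_nonneg _) hR
  have t7 : |(l1*y1+l2*y2+l3*y3+l4*y4)*(x0-y0)| ≤ ((|l1|+|l2|+|l3|+|l4|)*R)*d := by
    rw [abs_mul]
    exact mul_le_mul hLy h0 (abs_nonneg _) (by positivity)
  have main := abs_sum7_le (abs_term_le (k := k0) h0) (abs_term_le (k := k1) h1)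
    (abs_term_le (k := k2) h2) (abs_term_le (k := k3) h3) (abs_term_le (k := k4) h4) t6 t7
  nlinarith [main]


set_option maxHeartbeats 2000000 in
/-- The vector field `rhs` is Lipschitz on the box `[0,R]⁵`. -/
lemma rhs_lipschitz (p : ModelParams) (hp : p.Valid) {R : ℝ} (hR : 0 ≤ R) :
    ∃ K : ℝ, 0 ≤ K ∧ ∀ x y : Fin 5 → ℝ, (∀ i, 0 ≤ x i ∧ x i ≤ R) →
      (∀ i, 0 ≤ y i ∧ y i ≤ R) → ∀ d : ℝ, 0 ≤ d → (∀ i, |x i - y i| ≤ d) →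
      ∀ i, |rhs p x i - rhs p y i| ≤ K * d := by
  obtain ⟨hLam, hdd, hds, hdm, hdp, hdmp, hbs, hbm, hbp, hbmp, hts, htm, htp, htmp,
    hes, hem, hep, hemp, hth, hal, haH, hbH, hc⟩ := hp
  have h2R : (0:ℝ) ≤ 2*R := by linarith
  refine ⟨((|(-p.d)| + |(0:ℝ)| + |(0:ℝ)| + |(0:ℝ)| + |(0:ℝ)|)
        + 2*R*(|(-p.bs)| + |(-p.bm)| + |(-p.bp)| + |(-p.bmp)|))
      + ((|(0:ℝ)| + |(-p.ds)| + |(0:ℝ)| + |(0:ℝ)| + |(0:ℝ)|)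
        + 2*R*(|p.ts*p.bs*(1-p.es)| + |p.em*p.tm*p.bm| + |p.th*p.tp*p.bp| + |(0:ℝ)|))
      + ((|(0:ℝ)| + |(0:ℝ)| + |(-p.dm)| + |(0:ℝ)| + |(0:ℝ)|)
        + 2*R*(|p.es*p.ts*p.bs| + |p.tm*p.bm*(1-p.em)| + |(0:ℝ)| + |p.th*p.tmp*p.bmp|))
      + ((|(0:ℝ)| + |(0:ℝ)| + |(0:ℝ)| + |(-p.dp)| + |(0:ℝ)|)
        + 2*R*(|(0:ℝ)| + |(0:ℝ)| + |p.tp*p.bp*(1-p.th)*(1-p.ep)| + |p.emp*(1-p.th)*p.tmp*p.bmp|))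
      + ((|(0:ℝ)| + |(0:ℝ)| + |(0:ℝ)| + |(0:ℝ)| + |(-p.dmp)|)
        + 2*R*(|(0:ℝ)| + |(0:ℝ)| + |p.ep*(1-p.th)*p.tp*p.bp| + |p.tmp*p.bmp*(1-p.th)*(1-p.emp)|))
      + 7*p.al*(max 1 (4*R)/(p.aH+p.bH)), ?_, ?_⟩
  · have hq : (0:ℝ) ≤ 7*p.al*(max 1 (4*R)/(p.aH+p.bH)) :=
      mul_nonneg (mul_nonneg (by norm_num) hal)
        (div_nonneg (le_max_of_le_left zero_le_one) hc.le)
    refine add_nonneg (add_nonneg (add_nonneg (add_nonneg (add_nonneg ?_ ?_) ?_) ?_) ?_) hq <;>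
      exact add_nonneg (by positivity) (mul_nonneg h2R (by positivity))
  intro x y hx hy d hd0 hdi i
  have hxN1 : x 1 ≤ x 1 + x 2 + x 3 + x 4 := by linarith [(hx 2).1, (hx 3).1, (hx 4).1]
  have hxN2 : x 2 ≤ x 1 + x 2 + x 3 + x 4 := by linarith [(hx 1).1, (hx 3).1, (hx 4).1]
  have hyN1 : y 1 ≤ y 1 + y 2 + y 3 + y 4 := by linarith [(hy 2).1, (hy 3).1, (hy 4).1]
  have hyN2 : y 2 ≤ y 1 + y 2 + y 3 + y 4 := by linarith [(hy 1).1, (hy 3).1, (hy 4).1]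
  have hxm0 : 0 ≤ x 3 + x 4 := by linarith [(hx 3).1, (hx 4).1]
  have hym0 : 0 ≤ y 3 + y 4 := by linarith [(hy 3).1, (hy 4).1]
  have hxmN : x 3 + x 4 ≤ x 1 + x 2 + x 3 + x 4 := by linarith [(hx 1).1, (hx 2).1]
  have hymN : y 3 + y 4 ≤ y 1 + y 2 + y 3 + y 4 := by linarith [(hy 1).1, (hy 2).1]
  have hxmR : x 3 + x 4 ≤ 4*R := by linarith [(hx 3).2, (hx 4).2]
  have hymR : y 3 + y 4 ≤ 4*R := by linarith [(hy 3).2, (hy 4).2]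
  have hx1R : x 1 ≤ 4*R := by linarith [(hx 1).2]
  have hx2R : x 2 ≤ 4*R := by linarith [(hx 2).2]
  have hy1R : y 1 ≤ 4*R := by linarith [(hy 1).2]
  have hy2R : y 2 ≤ 4*R := by linarith [(hy 2).2]
  have hdm : |(x 3 + x 4) - (y 3 + y 4)| ≤ d + d := by
    have h : (x 3 + x 4) - (y 3 + y 4) = (x 3 - y 3) + (x 4 - y 4) := by ring
    rw [h]
    exact (abs_add_le _ _).trans (add_le_add (hdi 3) (hdi 4))
  have hdN : |(x 1 + x 2 + x 3 + x 4) - (y 1 + y 2 + y 3 + y 4)| ≤ 4*d := by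
    have h : (x 1 + x 2 + x 3 + x 4) - (y 1 + y 2 + y 3 + y 4)
        = ((x 1 - y 1) + (x 2 - y 2)) + ((x 3 - y 3) + (x 4 - y 4)) := by ring
    rw [h]
    have a1 := abs_add_le ((x 1 - y 1) + (x 2 - y 2)) ((x 3 - y 3) + (x 4 - y 4))
    have a2 := abs_add_le (x 1 - y 1) (x 2 - y 2)
    have a3 := abs_add_le (x 3 - y 3) (x 4 - y 4)
    have := hdi 1; have := hdi 2; have := hdi 3; have := hdi 4
    linarith
  have hq1 : |p.al/(p.aH + p.bH*(x 1 + x 2 + x 3 + x 4)) * x 1 * (x 3 + x 4)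
      - p.al/(p.aH + p.bH*(y 1 + y 2 + y 3 + y 4)) * y 1 * (y 3 + y 4)|
      ≤ 7*p.al*(max 1 (4*R)/(p.aH+p.bH))*d :=
    qlip haH hbH hal hc hR (hx 1).1 hxN1 hx1R hxm0 hxmN hxmR
      (hy 1).1 hyN1 hy1R hym0 hymN hymR (hdi 1) hdm hdN
  have hq2 : |p.al/(p.aH + p.bH*(x 1 + x 2 + x 3 + x 4)) * x 2 * (x 3 + x 4)
      - p.al/(p.aH + p.bH*(y 1 + y 2 + y 3 + y 4)) * y 2 * (y 3 + y 4)|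
      ≤ 7*p.al*(max 1 (4*R)/(p.aH+p.bH))*d :=
    qlip haH hbH hal hc hR (hx 2).1 hxN2 hx2R hxm0 hxmN hxmR
      (hy 2).1 hyN2 hy2R hym0 hymN hymR (hdi 2) hdm hdN
  have hKq0 : (0:ℝ) ≤ 7*p.al*(max 1 (4*R)/(p.aH+p.bH))*d :=
    mul_nonneg (mul_nonneg (mul_nonneg (by norm_num) hal)
      (div_nonneg (le_max_of_le_left zero_le_one) hc.le)) hd0
  have hB0 : (0:ℝ) ≤ ((|(-p.d)| + |(0:ℝ)| + |(0:ℝ)| + |(0:ℝ)| + |(0:ℝ)|)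
      + 2*R*(|(-p.bs)| + |(-p.bm)| + |(-p.bp)| + |(-p.bmp)|)) * d :=
    mul_nonneg (add_nonneg (by positivity) (mul_nonneg h2R (by positivity))) hd0
  have hB1 : (0:ℝ) ≤ ((|(0:ℝ)| + |(-p.ds)| + |(0:ℝ)| + |(0:ℝ)| + |(0:ℝ)|)
      + 2*R*(|p.ts*p.bs*(1-p.es)| + |p.em*p.tm*p.bm| + |p.th*p.tp*p.bp| + |(0:ℝ)|)) * d :=
    mul_nonneg (add_nonneg (by positivity) (mul_nonneg h2R (by positivity))) hd0
  have hB2 : (0:ℝ) ≤ ((|(0:ℝ)| + |(0:ℝ)| + |(-p.dm)| + |(0:ℝ)| + |(0:ℝ)|)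
      + 2*R*(|p.es*p.ts*p.bs| + |p.tm*p.bm*(1-p.em)| + |(0:ℝ)| + |p.th*p.tmp*p.bmp|)) * d :=
    mul_nonneg (add_nonneg (by positivity) (mul_nonneg h2R (by positivity))) hd0
  have hB3 : (0:ℝ) ≤ ((|(0:ℝ)| + |(0:ℝ)| + |(0:ℝ)| + |(-p.dp)| + |(0:ℝ)|)
      + 2*R*(|(0:ℝ)| + |(0:ℝ)| + |p.tp*p.bp*(1-p.th)*(1-p.ep)| + |p.emp*(1-p.th)*p.tmp*p.bmp|)) * d :=
    mul_nonneg (add_nonneg (by positivity) (mul_nonneg h2R (by positivity))) hd0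
  have hB4 : (0:ℝ) ≤ ((|(0:ℝ)| + |(0:ℝ)| + |(0:ℝ)| + |(0:ℝ)| + |(-p.dmp)|)
      + 2*R*(|(0:ℝ)| + |(0:ℝ)| + |p.ep*(1-p.th)*p.tp*p.bp| + |p.tmp*p.bmp*(1-p.th)*(1-p.emp)|)) * d :=
    mul_nonneg (add_nonneg (by positivity) (mul_nonneg h2R (by positivity))) hd0
  fin_cases i
  · -- component 0
    show |rhs p x 0 - rhs p y 0| ≤ _
    have e : rhs p x 0 - rhs p y 0 =
        ((-p.d)*(x 0) + 0*(x 1) + 0*(x 2) + 0*(x 3) + 0*(x 4)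
          + (x 0)*((-p.bs)*(x 1)+(-p.bm)*(x 2)+(-p.bp)*(x 3)+(-p.bmp)*(x 4)))
        - ((-p.d)*(y 0) + 0*(y 1) + 0*(y 2) + 0*(y 3) + 0*(y 4)
          + (y 0)*((-p.bs)*(y 1)+(-p.bm)*(y 2)+(-p.bp)*(y 3)+(-p.bmp)*(y 4))) := by
      simp [rhs]; ring
    rw [e]
    have hb := comp_lip (k0 := -p.d) (k1 := (0:ℝ)) (k2 := (0:ℝ)) (k3 := (0:ℝ)) (k4 := (0:ℝ))
      (l1 := -p.bs) (l2 := -p.bm) (l3 := -p.bp) (l4 := -p.bmp)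
      (hx 0).1 (hx 0).2 (hy 1).1 (hy 1).2 (hy 2).1 (hy 2).2 (hy 3).1 (hy 3).2 (hy 4).1 (hy 4).2
      (hdi 0) (hdi 1) (hdi 2) (hdi 3) (hdi 4)
    refine le_trans hb (le_of_sub_nonneg ?_)
    convert add_nonneg (add_nonneg (add_nonneg (add_nonneg (hB1) hB2) hB3) hB4) hKq0 using 1
    ring_nf
  · -- component 1
    show |rhs p x 1 - rhs p y 1| ≤ _
    have e : rhs p x 1 - rhs p y 1 =
        ((0*(x 0) + (-p.ds)*(x 1) + 0*(x 2) + 0*(x 3) + 0*(x 4)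
          + (x 0)*((p.ts*p.bs*(1-p.es))*(x 1)+(p.em*p.tm*p.bm)*(x 2)+(p.th*p.tp*p.bp)*(x 3)+0*(x 4)))
        - (0*(y 0) + (-p.ds)*(y 1) + 0*(y 2) + 0*(y 3) + 0*(y 4)
          + (y 0)*((p.ts*p.bs*(1-p.es))*(y 1)+(p.em*p.tm*p.bm)*(y 2)+(p.th*p.tp*p.bp)*(y 3)+0*(y 4))))
        - (p.al/(p.aH + p.bH*(x 1 + x 2 + x 3 + x 4)) * x 1 * (x 3 + x 4)
          - p.al/(p.aH + p.bH*(y 1 + y 2 + y 3 + y 4)) * y 1 * (y 3 + y 4)) := by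
      simp [rhs]; ring
    rw [e]
    have hb := comp_lip (k0 := (0:ℝ)) (k1 := -p.ds) (k2 := (0:ℝ)) (k3 := (0:ℝ)) (k4 := (0:ℝ))
      (l1 := p.ts*p.bs*(1-p.es)) (l2 := p.em*p.tm*p.bm) (l3 := p.th*p.tp*p.bp) (l4 := (0:ℝ))
      (hx 0).1 (hx 0).2 (hy 1).1 (hy 1).2 (hy 2).1 (hy 2).2 (hy 3).1 (hy 3).2 (hy 4).1 (hy 4).2
      (hdi 0) (hdi 1) (hdi 2) (hdi 3) (hdi 4)
    have htri := abs_sub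
      ((0*(x 0) + (-p.ds)*(x 1) + 0*(x 2) + 0*(x 3) + 0*(x 4)
          + (x 0)*((p.ts*p.bs*(1-p.es))*(x 1)+(p.em*p.tm*p.bm)*(x 2)+(p.th*p.tp*p.bp)*(x 3)+0*(x 4)))
        - (0*(y 0) + (-p.ds)*(y 1) + 0*(y 2) + 0*(y 3) + 0*(y 4)
          + (y 0)*((p.ts*p.bs*(1-p.es))*(y 1)+(p.em*p.tm*p.bm)*(y 2)+(p.th*p.tp*p.bp)*(y 3)+0*(y 4))))
      (p.al/(p.aH + p.bH*(x 1 + x 2 + x 3 + x 4)) * x 1 * (x 3 + x 4)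
          - p.al/(p.aH + p.bH*(y 1 + y 2 + y 3 + y 4)) * y 1 * (y 3 + y 4))
    refine le_trans htri (le_trans (add_le_add hb hq1) (le_of_sub_nonneg ?_))
    convert add_nonneg (add_nonneg (add_nonneg (hB0) hB2) hB3) hB4 using 1
    ring_nf
  · -- component 2
    show |rhs p x 2 - rhs p y 2| ≤ _
    have e : rhs p x 2 - rhs p y 2 =
        ((0*(x 0) + 0*(x 1) + (-p.dm)*(x 2) + 0*(x 3) + 0*(x 4)
          + (x 0)*((p.es*p.ts*p.bs)*(x 1)+(p.tm*p.bm*(1-p.em))*(x 2)+0*(x 3)+(p.th*p.tmp*p.bmp)*(x 4)))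
        - (0*(y 0) + 0*(y 1) + (-p.dm)*(y 2) + 0*(y 3) + 0*(y 4)
          + (y 0)*((p.es*p.ts*p.bs)*(y 1)+(p.tm*p.bm*(1-p.em))*(y 2)+0*(y 3)+(p.th*p.tmp*p.bmp)*(y 4))))
        - (p.al/(p.aH + p.bH*(x 1 + x 2 + x 3 + x 4)) * x 2 * (x 3 + x 4)
          - p.al/(p.aH + p.bH*(y 1 + y 2 + y 3 + y 4)) * y 2 * (y 3 + y 4)) := by
      simp [rhs]; ring
    rw [e]
    have hb := comp_lip (k0 := (0:ℝ)) (k1 := (0:ℝ)) (k2 := -p.dm) (k3 := (0:ℝ)) (k4 := (0:ℝ))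
      (l1 := p.es*p.ts*p.bs) (l2 := p.tm*p.bm*(1-p.em)) (l3 := (0:ℝ)) (l4 := p.th*p.tmp*p.bmp)
      (hx 0).1 (hx 0).2 (hy 1).1 (hy 1).2 (hy 2).1 (hy 2).2 (hy 3).1 (hy 3).2 (hy 4).1 (hy 4).2
      (hdi 0) (hdi 1) (hdi 2) (hdi 3) (hdi 4)
    have htri := abs_sub
      ((0*(x 0) + 0*(x 1) + (-p.dm)*(x 2) + 0*(x 3) + 0*(x 4)
          + (x 0)*((p.es*p.ts*p.bs)*(x 1)+(p.tm*p.bm*(1-p.em))*(x 2)+0*(x 3)+(p.th*p.tmp*p.bmp)*(x 4)))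
        - (0*(y 0) + 0*(y 1) + (-p.dm)*(y 2) + 0*(y 3) + 0*(y 4)
          + (y 0)*((p.es*p.ts*p.bs)*(y 1)+(p.tm*p.bm*(1-p.em))*(y 2)+0*(y 3)+(p.th*p.tmp*p.bmp)*(y 4))))
      (p.al/(p.aH + p.bH*(x 1 + x 2 + x 3 + x 4)) * x 2 * (x 3 + x 4)
          - p.al/(p.aH + p.bH*(y 1 + y 2 + y 3 + y 4)) * y 2 * (y 3 + y 4))
    refine le_trans htri (le_trans (add_le_add hb hq2) (le_of_sub_nonneg ?_))
    convert add_nonneg (add_nonneg (add_nonneg (hB0) hB1) hB3) hB4 using 1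
    ring_nf
  · -- component 3
    show |rhs p x 3 - rhs p y 3| ≤ _
    have e : rhs p x 3 - rhs p y 3 =
        ((0*(x 0) + 0*(x 1) + 0*(x 2) + (-p.dp)*(x 3) + 0*(x 4)
          + (x 0)*(0*(x 1)+0*(x 2)+(p.tp*p.bp*(1-p.th)*(1-p.ep))*(x 3)+(p.emp*(1-p.th)*p.tmp*p.bmp)*(x 4)))
        - (0*(y 0) + 0*(y 1) + 0*(y 2) + (-p.dp)*(y 3) + 0*(y 4)
          + (y 0)*(0*(y 1)+0*(y 2)+(p.tp*p.bp*(1-p.th)*(1-p.ep))*(y 3)+(p.emp*(1-p.th)*p.tmp*p.bmp)*(y 4))))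
        + (p.al/(p.aH + p.bH*(x 1 + x 2 + x 3 + x 4)) * x 1 * (x 3 + x 4)
          - p.al/(p.aH + p.bH*(y 1 + y 2 + y 3 + y 4)) * y 1 * (y 3 + y 4)) := by
      simp [rhs]; ring
    rw [e]
    have hb := comp_lip (k0 := (0:ℝ)) (k1 := (0:ℝ)) (k2 := (0:ℝ)) (k3 := -p.dp) (k4 := (0:ℝ))
      (l1 := (0:ℝ)) (l2 := (0:ℝ)) (l3 := p.tp*p.bp*(1-p.th)*(1-p.ep)) (l4 := p.emp*(1-p.th)*p.tmp*p.bmp)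
      (hx 0).1 (hx 0).2 (hy 1).1 (hy 1).2 (hy 2).1 (hy 2).2 (hy 3).1 (hy 3).2 (hy 4).1 (hy 4).2
      (hdi 0) (hdi 1) (hdi 2) (hdi 3) (hdi 4)
    have htri := abs_add_le
      ((0*(x 0) + 0*(x 1) + 0*(x 2) + (-p.dp)*(x 3) + 0*(x 4)
          + (x 0)*(0*(x 1)+0*(x 2)+(p.tp*p.bp*(1-p.th)*(1-p.ep))*(x 3)+(p.emp*(1-p.th)*p.tmp*p.bmp)*(x 4)))
        - (0*(y 0) + 0*(y 1) + 0*(y 2) + (-p.dp)*(y 3) + 0*(y 4)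
          + (y 0)*(0*(y 1)+0*(y 2)+(p.tp*p.bp*(1-p.th)*(1-p.ep))*(y 3)+(p.emp*(1-p.th)*p.tmp*p.bmp)*(y 4))))
      (p.al/(p.aH + p.bH*(x 1 + x 2 + x 3 + x 4)) * x 1 * (x 3 + x 4)
          - p.al/(p.aH + p.bH*(y 1 + y 2 + y 3 + y 4)) * y 1 * (y 3 + y 4))
    refine le_trans htri (le_trans (add_le_add hb hq1) (le_of_sub_nonneg ?_))
    convert add_nonneg (add_nonneg (add_nonneg (hB0) hB1) hB2) hB4 using 1
    ring_nf
  · -- component 4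
    show |rhs p x 4 - rhs p y 4| ≤ _
    have e : rhs p x 4 - rhs p y 4 =
        ((0*(x 0) + 0*(x 1) + 0*(x 2) + 0*(x 3) + (-p.dmp)*(x 4)
          + (x 0)*(0*(x 1)+0*(x 2)+(p.ep*(1-p.th)*p.tp*p.bp)*(x 3)+(p.tmp*p.bmp*(1-p.th)*(1-p.emp))*(x 4)))
        - (0*(y 0) + 0*(y 1) + 0*(y 2) + 0*(y 3) + (-p.dmp)*(y 4)
          + (y 0)*(0*(y 1)+0*(y 2)+(p.ep*(1-p.th)*p.tp*p.bp)*(y 3)+(p.tmp*p.bmp*(1-p.th)*(1-p.emp))*(y 4))))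
        + (p.al/(p.aH + p.bH*(x 1 + x 2 + x 3 + x 4)) * x 2 * (x 3 + x 4)
          - p.al/(p.aH + p.bH*(y 1 + y 2 + y 3 + y 4)) * y 2 * (y 3 + y 4)) := by
      simp [rhs]; ring
    rw [e]
    have hb := comp_lip (k0 := (0:ℝ)) (k1 := (0:ℝ)) (k2 := (0:ℝ)) (k3 := (0:ℝ)) (k4 := -p.dmp)
      (l1 := (0:ℝ)) (l2 := (0:ℝ)) (l3 := p.ep*(1-p.th)*p.tp*p.bp) (l4 := p.tmp*p.bmp*(1-p.th)*(1-p.emp))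
      (hx 0).1 (hx 0).2 (hy 1).1 (hy 1).2 (hy 2).1 (hy 2).2 (hy 3).1 (hy 3).2 (hy 4).1 (hy 4).2
      (hdi 0) (hdi 1) (hdi 2) (hdi 3) (hdi 4)
    have htri := abs_add_le
      ((0*(x 0) + 0*(x 1) + 0*(x 2) + 0*(x 3) + (-p.dmp)*(x 4)
          + (x 0)*(0*(x 1)+0*(x 2)+(p.ep*(1-p.th)*p.tp*p.bp)*(x 3)+(p.tmp*p.bmp*(1-p.th)*(1-p.emp))*(x 4)))
        - (0*(y 0) + 0*(y 1) + 0*(y 2) + 0*(y 3) + (-p.dmp)*(y 4)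
          + (y 0)*(0*(y 1)+0*(y 2)+(p.ep*(1-p.th)*p.tp*p.bp)*(y 3)+(p.tmp*p.bmp*(1-p.th)*(1-p.emp))*(y 4))))
      (p.al/(p.aH + p.bH*(x 1 + x 2 + x 3 + x 4)) * x 2 * (x 3 + x 4)
          - p.al/(p.aH + p.bH*(y 1 + y 2 + y 3 + y 4)) * y 2 * (y 3 + y 4))
    refine le_trans htri (le_trans (add_le_add hb hq2) (le_of_sub_nonneg ?_))
    convert add_nonneg (add_nonneg (add_nonneg (hB0) hB1) hB2) hB3 using 1
    ring_nf

lemma abs_min_sub_min (a b c : ℝ) : |min a c - min b c| ≤ |a - b| := by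
  have e1 : min a c ≤ min b c + |a - b| := by
    have h : min a c ≤ min (b + |a - b|) (c + |a - b|) :=
      min_le_min (by rcases abs_cases (a - b) with ⟨h1, _⟩ | ⟨h1, _⟩ <;> linarith)
        (le_add_of_nonneg_right (abs_nonneg _))
    simpa [min_add_add_right] using h
  have e2 : min b c ≤ min a c + |a - b| := by
    have h : min b c ≤ min (a + |a - b|) (c + |a - b|) :=
      min_le_min (by rcases abs_cases (a - b) with ⟨h1, _⟩ | ⟨h1, _⟩ <;> linarith)
        (le_add_of_nonneg_right (abs_nonneg _))
    simpa [min_add_add_right] using h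
  exact abs_sub_le_iff.2 ⟨by linarith, by linarith⟩

lemma abs_max_sub_max (a b c : ℝ) : |max a c - max b c| ≤ |a - b| := by
  have e1 : max a c ≤ max b c + |a - b| := by
    have h : max a c ≤ max (b + |a - b|) (c + |a - b|) :=
      max_le_max (by rcases abs_cases (a - b) with ⟨h1, _⟩ | ⟨h1, _⟩ <;> linarith)
        (le_add_of_nonneg_right (abs_nonneg _))
    simpa [max_add_add_right] using h
  have e2 : max b c ≤ max a c + |a - b| := by
    have h : max b c ≤ max (a + |a - b|) (c + |a - b|) :=
      max_le_max (by rcases abs_cases (a - b) with ⟨h1, _⟩ | ⟨h1, _⟩ <;> linarith)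
        (le_add_of_nonneg_right (abs_nonneg _))
    simpa [max_add_add_right] using h
  exact abs_sub_le_iff.2 ⟨by linarith, by linarith⟩

/-- coordinatewise clamping to `[0,R]`. -/
noncomputable def clampv (R : ℝ) (x : Fin 5 → ℝ) : Fin 5 → ℝ := fun i => min (max (x i) 0) R

lemma clampv_nonneg {R : ℝ} (hR : 0 ≤ R) (x : Fin 5 → ℝ) (i : Fin 5) : 0 ≤ clampv R x i :=
  le_min (le_max_right _ _) hR

lemma clampv_le_R {R : ℝ} (x : Fin 5 → ℝ) (i : Fin 5) : clampv R x i ≤ R := min_le_right _ _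

lemma clampv_le_self {R : ℝ} {x : Fin 5 → ℝ} {i : Fin 5} (h : 0 ≤ x i) : clampv R x i ≤ x i := by
  have : max (x i) 0 = x i := max_eq_left h
  exact (min_le_left _ _).trans this.le

lemma clampv_eq_self {R : ℝ} {x : Fin 5 → ℝ} (h0 : ∀ i, 0 ≤ x i) (hR' : ∀ i, x i ≤ R) :
    clampv R x = x := by
  funext i
  rw [clampv, max_eq_left (h0 i), min_eq_left (hR' i)]

lemma clampv_idem {R : ℝ} (hR : 0 ≤ R) (x : Fin 5 → ℝ) :
    clampv R (clampv R x) = clampv R x :=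
  clampv_eq_self (clampv_nonneg hR x) (fun i => clampv_le_R x i)

lemma clampv_zero_eq {R : ℝ} {x : Fin 5 → ℝ} {i : Fin 5} (h : x i ≤ 0) : clampv R x i = min 0 R := by
  rw [clampv, max_eq_right h]

lemma clampv_abs_le {R : ℝ} (x y : Fin 5 → ℝ) (i : Fin 5) :
    |clampv R x i - clampv R y i| ≤ |x i - y i| :=
  (abs_min_sub_min _ _ R).trans (abs_max_sub_max _ _ 0)

/-- the clamped vector field, globally Lipschitz. -/
lemma clamped_lipschitz (p : ModelParams) (hp : p.Valid) {R : ℝ} (hR : 0 ≤ R) :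
    ∃ K : NNReal, LipschitzWith K (fun x => rhs p (clampv R x)) := by
  obtain ⟨K, hK0, hK⟩ := rhs_lipschitz p hp hR
  refine ⟨Real.toNNReal K, ?_⟩
  rw [lipschitzWith_iff_dist_le_mul]
  intro x y
  rw [Real.coe_toNNReal _ hK0]
  have hd0 : (0:ℝ) ≤ K * dist x y := mul_nonneg hK0 dist_nonneg
  rw [dist_pi_le_iff hd0]
  intro i
  rw [Real.dist_eq]
  refine hK (clampv R x) (clampv R y)
    (fun j => ⟨clampv_nonneg hR x j, clampv_le_R x j⟩)
    (fun j => ⟨clampv_nonneg hR y j, clampv_le_R y j⟩) (dist x y) dist_nonneg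
    (fun j => (clampv_abs_le x y j).trans (by rw [← Real.dist_eq]; exact dist_le_pi_dist x y j)) i

/-- the clamped vector field is bounded. -/
lemma clamped_bounded (p : ModelParams) (hp : p.Valid) {R : ℝ} (hR : 0 ≤ R) :
    ∃ C : ℝ, 0 ≤ C ∧ ∀ x, ‖rhs p (clampv R x)‖ ≤ C := by
  obtain ⟨K, hK⟩ := clamped_lipschitz p hp hR
  refine ⟨‖rhs p (clampv R 0)‖ + K * R, by positivity, fun x => ?_⟩
  have h1 : dist (rhs p (clampv R x)) (rhs p (clampv R 0)) = dist (rhs p (clampv R (clampv R x))) (rhs p (clampv R 0)) := by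
    rw [clampv_idem hR]
  have h2 : dist (rhs p (clampv R x)) (rhs p (clampv R 0)) ≤ K * R := by
    rw [h1]
    refine (hK.dist_le_mul _ _).trans ?_
    have hd : dist (clampv R x) (0 : Fin 5 → ℝ) ≤ R := by
      rw [dist_pi_le_iff hR]
      intro i
      rw [Real.dist_eq, Pi.zero_apply, sub_zero, abs_of_nonneg (clampv_nonneg hR x i)]
      exact clampv_le_R x i
    exact mul_le_mul_of_nonneg_left hd K.coe_nonneg
  calc ‖rhs p (clampv R x)‖ ≤ ‖rhs p (clampv R 0)‖ + dist (rhs p (clampv R x)) (rhs p (clampv R 0)) := by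
        rw [dist_eq_norm]
        exact norm_le_insert' _ _
  _ ≤ ‖rhs p (clampv R 0)‖ + K * R := by linarith

/-- quasipositivity of the vector field on the nonnegative orthant. -/
lemma rhs_quasipos (p : ModelParams) (hp : p.Valid) (x : Fin 5 → ℝ) (hx : ∀ j, 0 ≤ x j)
    (i : Fin 5) (hi : x i = 0) : 0 ≤ rhs p x i := by
  obtain ⟨hLam, hdd, hds, hdm, hdp, hdmp, hbs, hbm, hbp, hbmp, hts, htm, htp, htmp,
    hes, hem, hep, hemp, hth, hal, haH, hbH, hc⟩ := hp
  have hD : 0 ≤ p.al / (p.aH + p.bH * (x 1 + x 2 + x 3 + x 4)) :=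
    div_nonneg hal (add_nonneg haH (mul_nonneg hbH (by linarith [hx 1, hx 2, hx 3, hx 4])))
  have hth1 : 0 ≤ 1 - p.th := by linarith [hth.2]
  fin_cases i
  · show 0 ≤ rhs p x 0
    have hi' : x 0 = 0 := hi
    simp [rhs, hi']
    linarith
  · show 0 ≤ rhs p x 1
    have hi' : x 1 = 0 := hi
    have e : rhs p x 1 = p.em*p.tm*p.bm*(x 0)*(x 2) + p.th*p.tp*p.bp*(x 0)*(x 3) := by
      simp [rhs, hi']
      try ring
    rw [e]
    have t1 : 0 ≤ p.em*p.tm*p.bm*(x 0)*(x 2) :=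
      mul_nonneg (mul_nonneg (mul_nonneg (mul_nonneg hem.1.le htm) hbm) (hx 0)) (hx 2)
    have t2 : 0 ≤ p.th*p.tp*p.bp*(x 0)*(x 3) :=
      mul_nonneg (mul_nonneg (mul_nonneg (mul_nonneg hth.1.le htp) hbp) (hx 0)) (hx 3)
    linarith
  · show 0 ≤ rhs p x 2
    have hi' : x 2 = 0 := hi
    have e : rhs p x 2 = p.es*p.ts*p.bs*(x 0)*(x 1) + p.th*p.tmp*p.bmp*(x 0)*(x 4) := by
      simp [rhs, hi']
      try ring
    rw [e]
    have t1 : 0 ≤ p.es*p.ts*p.bs*(x 0)*(x 1) :=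
      mul_nonneg (mul_nonneg (mul_nonneg (mul_nonneg hes.1.le hts) hbs) (hx 0)) (hx 1)
    have t2 : 0 ≤ p.th*p.tmp*p.bmp*(x 0)*(x 4) :=
      mul_nonneg (mul_nonneg (mul_nonneg (mul_nonneg hth.1.le htmp) hbmp) (hx 0)) (hx 4)
    linarith
  · show 0 ≤ rhs p x 3
    have hi' : x 3 = 0 := hi
    have e : rhs p x 3 = p.emp*(1-p.th)*p.tmp*p.bmp*(x 0)*(x 4)
        + p.al/(p.aH + p.bH*(x 1 + x 2 + x 3 + x 4)) * (x 1) * (x 3 + x 4) := by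
      simp [rhs, hi']
      try ring
    rw [e]
    have t1 : 0 ≤ p.emp*(1-p.th)*p.tmp*p.bmp*(x 0)*(x 4) :=
      mul_nonneg (mul_nonneg (mul_nonneg (mul_nonneg (mul_nonneg hemp.1.le hth1) htmp) hbmp)
        (hx 0)) (hx 4)
    have t2 : 0 ≤ p.al/(p.aH + p.bH*(x 1 + x 2 + x 3 + x 4)) * (x 1) * (x 3 + x 4) :=
      mul_nonneg (mul_nonneg hD (hx 1)) (by linarith [hx 3, hx 4])
    linarith
  · show 0 ≤ rhs p x 4
    have hi' : x 4 = 0 := hi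
    have e : rhs p x 4 = p.ep*(1-p.th)*p.tp*p.bp*(x 0)*(x 3)
        + p.al/(p.aH + p.bH*(x 1 + x 2 + x 3 + x 4)) * (x 2) * (x 3 + x 4) := by
      simp [rhs, hi']
      try ring
    rw [e]
    have t1 : 0 ≤ p.ep*(1-p.th)*p.tp*p.bp*(x 0)*(x 3) :=
      mul_nonneg (mul_nonneg (mul_nonneg (mul_nonneg (mul_nonneg hep.1.le hth1) htp) hbp)
        (hx 0)) (hx 3)
    have t2 : 0 ≤ p.al/(p.aH + p.bH*(x 1 + x 2 + x 3 + x 4)) * (x 2) * (x 3 + x 4) :=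
      mul_nonneg (mul_nonneg hD (hx 2)) (by linarith [hx 3, hx 4])
    linarith

/-- the total bacterial population grows at most linearly (HGT terms cancel). -/
lemma rhs_sum_le (p : ModelParams) (hp : p.Valid) (x : Fin 5 → ℝ) (hx : ∀ j, 0 ≤ x j)
    {MB : ℝ} (hB : x 0 ≤ MB) :
    rhs p x 1 + rhs p x 2 + rhs p x 3 + rhs p x 4
      ≤ (MB*(p.ts*p.bs + p.tm*p.bm + p.tp*p.bp + p.tmp*p.bmp)) * (x 1 + x 2 + x 3 + x 4) := by
  obtain ⟨hLam, hdd, hds, hdm, hdp, hdmp, hbs, hbm, hbp, hbmp, hts, htm, htp, htmp,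
    hes, hem, hep, hemp, hth, hal, haH, hbH, hc⟩ := hp
  have e : rhs p x 1 + rhs p x 2 + rhs p x 3 + rhs p x 4
      = x 0 * (p.ts*p.bs*(x 1) + p.tm*p.bm*(x 2) + p.tp*p.bp*(x 3) + p.tmp*p.bmp*(x 4))
        - (p.ds*(x 1) + p.dm*(x 2) + p.dp*(x 3) + p.dmp*(x 4)) := by
    simp [rhs]
    ring
  rw [e]
  set S := x 1 + x 2 + x 3 + x 4 with hS
  have hMB0 : 0 ≤ MB := (hx 0).trans hB
  have hS1 : x 1 ≤ S := by rw [hS]; linarith [hx 2, hx 3, hx 4]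
  have hS2 : x 2 ≤ S := by rw [hS]; linarith [hx 1, hx 3, hx 4]
  have hS3 : x 3 ≤ S := by rw [hS]; linarith [hx 1, hx 2, hx 4]
  have hS4 : x 4 ≤ S := by rw [hS]; linarith [hx 1, hx 2, hx 3]
  have t1 : p.ts*p.bs*(x 1) ≤ p.ts*p.bs*S := mul_le_mul_of_nonneg_left hS1 (mul_nonneg hts hbs)
  have t2 : p.tm*p.bm*(x 2) ≤ p.tm*p.bm*S := mul_le_mul_of_nonneg_left hS2 (mul_nonneg htm hbm)
  have t3 : p.tp*p.bp*(x 3) ≤ p.tp*p.bp*S := mul_le_mul_of_nonneg_left hS3 (mul_nonneg htp hbp)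
  have t4 : p.tmp*p.bmp*(x 4) ≤ p.tmp*p.bmp*S :=
    mul_le_mul_of_nonneg_left hS4 (mul_nonneg htmp hbmp)
  have hL0 : 0 ≤ p.ts*p.bs*(x 1) + p.tm*p.bm*(x 2) + p.tp*p.bp*(x 3) + p.tmp*p.bmp*(x 4) := by
    have a1 : 0 ≤ p.ts*p.bs*(x 1) := mul_nonneg (mul_nonneg hts hbs) (hx 1)
    have a2 : 0 ≤ p.tm*p.bm*(x 2) := mul_nonneg (mul_nonneg htm hbm) (hx 2)
    have a3 : 0 ≤ p.tp*p.bp*(x 3) := mul_nonneg (mul_nonneg htp hbp) (hx 3)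
    have a4 : 0 ≤ p.tmp*p.bmp*(x 4) := mul_nonneg (mul_nonneg htmp hbmp) (hx 4)
    linarith
  have key2 : x 0 * (p.ts*p.bs*(x 1) + p.tm*p.bm*(x 2) + p.tp*p.bp*(x 3) + p.tmp*p.bmp*(x 4))
      ≤ MB * (p.ts*p.bs*(x 1) + p.tm*p.bm*(x 2) + p.tp*p.bp*(x 3) + p.tmp*p.bmp*(x 4)) :=
    mul_le_mul_of_nonneg_right hB hL0
  have key3 : MB * (p.ts*p.bs*(x 1) + p.tm*p.bm*(x 2) + p.tp*p.bp*(x 3) + p.tmp*p.bmp*(x 4))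
      ≤ MB * ((p.ts*p.bs + p.tm*p.bm + p.tp*p.bp + p.tmp*p.bmp) * S) :=
    mul_le_mul_of_nonneg_left (by linarith) hMB0
  have d1 : 0 ≤ p.ds*(x 1) := mul_nonneg hds.le (hx 1)
  have d2 : 0 ≤ p.dm*(x 2) := mul_nonneg hdm.le (hx 2)
  have d3 : 0 ≤ p.dp*(x 3) := mul_nonneg hdp.le (hx 3)
  have d4 : 0 ≤ p.dmp*(x 4) := mul_nonneg hdmp.le (hx 4)
  have final : MB * ((p.ts*p.bs + p.tm*p.bm + p.tp*p.bp + p.tmp*p.bmp) * S)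
      = (MB*(p.ts*p.bs + p.tm*p.bm + p.tp*p.bp + p.tmp*p.bmp)) * S := by ring
  linarith [final ▸ key3]

/-- existence of a solution of the clamped system on `(-1, n+1)`. -/
lemma exists_clamped_sol (p : ModelParams) (hp : p.Valid) {R : ℝ} (hR : 0 ≤ R)
    (ω : Fin 5 → ℝ) (n : ℝ) (hn : 0 ≤ n) :
    ∃ f : ℝ → (Fin 5 → ℝ), f 0 = ω ∧
      ∀ t ∈ Ioo (-1:ℝ) (n+1), HasDerivAt f (rhs p (clampv R (f t))) t := by
  obtain ⟨K, hK⟩ := clamped_lipschitz p hp hR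
  obtain ⟨C, hC0, hC⟩ := clamped_bounded p hp hR
  have hpl : IsPicardLindelof (fun _ x => rhs p (clampv R x)) (tmin := -1) (tmax := n+1)
      ⟨0, ⟨by linarith, by linarith⟩⟩ ω (Real.toNNReal (C*(n+1)+1)) 0 (Real.toNNReal C) K :=
    { lipschitzOnWith := fun t _ => hK.lipschitzOnWith
      continuousOn := fun x _ => continuousOn_const
      norm_le := fun t _ x _ => by rw [Real.coe_toNNReal _ hC0]; exact hC x
      mul_max_le := by
        show ((Real.toNNReal C : NNReal) : ℝ) * max ((n+1) - (0:ℝ)) (0 - (-1))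
          ≤ ((Real.toNNReal (C*(n+1)+1) : NNReal) : ℝ) - ((0 : NNReal) : ℝ)
        rw [Real.coe_toNNReal _ hC0, NNReal.coe_zero, sub_zero, Real.coe_toNNReal _ (by positivity)]
        rw [sub_zero]
        have h1 : max (n+1) (0 - (-1:ℝ)) ≤ n+1 := max_le le_rfl (by linarith)
        linarith [mul_le_mul_of_nonneg_left h1 hC0] }
  obtain ⟨f, hf0, hf⟩ := hpl.exists_eq_forall_mem_Icc_hasDerivWithinAt₀
  exact ⟨f, hf0, fun t ht => (hf t ⟨ht.1.le, ht.2.le⟩).hasDerivAt (Icc_mem_nhds ht.1 ht.2)⟩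

/-- invariance properties of solutions of the clamped system: nonnegativity, bound on the
nutrient, and exponential bound on the total population. -/
lemma invariance (p : ModelParams) (hp : p.Valid) {R b : ℝ} (hR0 : 0 ≤ R) (hb : 0 ≤ b)
    (f : ℝ → Fin 5 → ℝ)
    (hf : ∀ t ∈ Icc (0:ℝ) b, HasDerivAt f (rhs p (clampv R (f t))) t)
    (hω : ∀ i, 0 ≤ f 0 i)
    (hMB : max (f 0 0) (p.Lam / p.d) ≤ R) :
    (∀ t ∈ Icc (0:ℝ) b, ∀ i, 0 ≤ f t i) ∧
    (∀ t ∈ Icc (0:ℝ) b, f t 0 ≤ max (f 0 0) (p.Lam/p.d)) ∧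
    (∀ t ∈ Icc (0:ℝ) b, f t 1 + f t 2 + f t 3 + f t 4
      ≤ (f 0 1 + f 0 2 + f 0 3 + f 0 4) *
        Real.exp ((max (f 0 0) (p.Lam/p.d) * (p.ts*p.bs + p.tm*p.bm + p.tp*p.bp + p.tmp*p.bmp)) * t)) := by
  have hval := hp
  obtain ⟨hLam, hdd, hds, hdm, hdp, hdmp, hbs, hbm, hbp, hbmp, hts, htm, htp, htmp,
    hes, hem, hep, hemp, hth, hal, haH, hbH, hc⟩ := hval
  set MB := max (f 0 0) (p.Lam/p.d) with hMBdef
  have hMB0 : 0 < MB := lt_of_lt_of_le (div_pos hLam hdd) (le_max_right _ _)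
  -- part 1 : nonnegativity
  have part1 : ∀ t ∈ Icc (0:ℝ) b, ∀ i, 0 ≤ f t i := by
    intro t ht i
    have key := barrier (f := fun s => -(f s i)) (g := fun s => -(rhs p (clampv R (f s)) i))
      (b := b) (M := 0)
      (fun s hs => ((hasDerivAt_pi.1 (hf s hs)) i).neg)
      (by simp [hω i])
      ?_ t ht
    · have key' : -(f t i) ≤ 0 := key
      linarith
    · intro s hs hfs
      have hfs' : (0:ℝ) ≤ -(f s i) := hfs
      show -(rhs p (clampv R (f s)) i) ≤ 0
      simp only [neg_nonpos]
      apply rhs_quasipos p hp _ (clampv_nonneg hR0 _)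
      rw [clampv_zero_eq (by linarith : f s i ≤ 0), min_eq_left hR0]
  -- part 2 : bound on the nutrient component
  have part2 : ∀ t ∈ Icc (0:ℝ) b, f t 0 ≤ MB := by
    apply barrier (g := fun s => rhs p (clampv R (f s)) 0)
      (fun s hs => (hasDerivAt_pi.1 (hf s hs)) 0) (le_max_left _ _)
    intro s hs hfs
    set u := clampv R (f s) with hu
    have hu0 : u 0 = min (f s 0) R := by
      rw [hu, clampv, max_eq_left (by linarith [hMB0, hfs] : 0 ≤ f s 0)]
    have hu0MB : MB ≤ u 0 := by
      rw [hu0]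
      exact le_min hfs hMB
    have hu0nn : 0 ≤ u 0 := le_trans hMB0.le hu0MB
    have hLd : p.Lam ≤ p.d * MB := by
      rw [hMBdef]
      have : p.Lam / p.d ≤ MB := le_max_right _ _
      calc p.Lam = p.d * (p.Lam / p.d) := by field_simp
      _ ≤ p.d * MB := mul_le_mul_of_nonneg_left this hdd.le
    have hterm : 0 ≤ u 0 * (p.bs * u 1 + p.bm * u 2 + p.bp * u 3 + p.bmp * u 4) := by
      have h1 := clampv_nonneg hR0 (f s) 1
      have h2 := clampv_nonneg hR0 (f s) 2
      have h3 := clampv_nonneg hR0 (f s) 3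
      have h4 := clampv_nonneg hR0 (f s) 4
      have : 0 ≤ p.bs * u 1 + p.bm * u 2 + p.bp * u 3 + p.bmp * u 4 := by
        have a1 : 0 ≤ p.bs * u 1 := mul_nonneg hbs h1
        have a2 : 0 ≤ p.bm * u 2 := mul_nonneg hbm h2
        have a3 : 0 ≤ p.bp * u 3 := mul_nonneg hbp h3
        have a4 : 0 ≤ p.bmp * u 4 := mul_nonneg hbmp h4
        linarith
      exact mul_nonneg hu0nn this
    have e : rhs p u 0 = p.Lam - p.d * u 0 - u 0 * (p.bs * u 1 + p.bm * u 2 + p.bp * u 3 + p.bmp * u 4) := by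
      simp [rhs]
    rw [e]
    have : p.d * MB ≤ p.d * u 0 := mul_le_mul_of_nonneg_left hu0MB hdd.le
    linarith
  -- part 3 : exponential bound on the total population
  set Kc := MB * (p.ts*p.bs + p.tm*p.bm + p.tp*p.bp + p.tmp*p.bmp) with hKc
  have hKc0 : 0 ≤ Kc := by
    apply mul_nonneg hMB0.le
    have a1 : 0 ≤ p.ts*p.bs := mul_nonneg hts hbs
    have a2 : 0 ≤ p.tm*p.bm := mul_nonneg htm hbm
    have a3 : 0 ≤ p.tp*p.bp := mul_nonneg htp hbp
    have a4 : 0 ≤ p.tmp*p.bmp := mul_nonneg htmp hbmp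
    linarith
  have part3 : ∀ t ∈ Icc (0:ℝ) b, f t 1 + f t 2 + f t 3 + f t 4
      ≤ (f 0 1 + f 0 2 + f 0 3 + f 0 4) * Real.exp (Kc * t) := by
    have hbar := barrier
      (f := fun s => (f s 1 + f s 2 + f s 3 + f s 4) * Real.exp (-(Kc * s)))
      (g := fun s => (rhs p (clampv R (f s)) 1 + rhs p (clampv R (f s)) 2
          + rhs p (clampv R (f s)) 3 + rhs p (clampv R (f s)) 4) * Real.exp (-(Kc * s))
          + (f s 1 + f s 2 + f s 3 + f s 4) * (Real.exp (-(Kc * s)) * (-Kc)))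
      (b := b) (M := f 0 1 + f 0 2 + f 0 3 + f 0 4) ?_ (by simp) ?_
    · intro t ht
      have h := hbar t ht
      have hee : Real.exp (-(Kc*t)) * Real.exp (Kc*t) = 1 := by
        rw [← Real.exp_add]; simp
      calc f t 1 + f t 2 + f t 3 + f t 4
          = ((f t 1 + f t 2 + f t 3 + f t 4) * Real.exp (-(Kc*t))) * Real.exp (Kc*t) := by
            rw [mul_assoc, hee, mul_one]
      _ ≤ (f 0 1 + f 0 2 + f 0 3 + f 0 4) * Real.exp (Kc*t) :=
          mul_le_mul_of_nonneg_right h (Real.exp_pos _).le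
    · intro s hs
      have hS : HasDerivAt (fun r => f r 1 + f r 2 + f r 3 + f r 4)
          (rhs p (clampv R (f s)) 1 + rhs p (clampv R (f s)) 2
            + rhs p (clampv R (f s)) 3 + rhs p (clampv R (f s)) 4) s := by
        have h1 := (hasDerivAt_pi.1 (hf s hs)) 1
        have h2 := (hasDerivAt_pi.1 (hf s hs)) 2
        have h3 := (hasDerivAt_pi.1 (hf s hs)) 3
        have h4 := (hasDerivAt_pi.1 (hf s hs)) 4
        exact ((h1.add h2).add h3).add h4
      have hE : HasDerivAt (fun r => Real.exp (-(Kc * r))) (Real.exp (-(Kc * s)) * (-Kc)) s := by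
        have : HasDerivAt (fun r : ℝ => -(Kc * r)) (-Kc) s := by
          have h' := ((hasDerivAt_id' s).const_mul Kc).neg; rwa [mul_one] at h'
        exact this.exp
      exact hS.mul hE
    · intro s hs _
      show (rhs p (clampv R (f s)) 1 + rhs p (clampv R (f s)) 2
          + rhs p (clampv R (f s)) 3 + rhs p (clampv R (f s)) 4) * Real.exp (-(Kc * s))
          + (f s 1 + f s 2 + f s 3 + f s 4) * (Real.exp (-(Kc * s)) * (-Kc)) ≤ 0
      set u := clampv R (f s) with hu
      have hun : ∀ j, 0 ≤ u j := clampv_nonneg hR0 (f s)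
      have huB : u 0 ≤ MB := by
        have h1 : u 0 ≤ f s 0 := clampv_le_self (part1 s hs 0)
        exact h1.trans (part2 s hs)
      have hsum := rhs_sum_le p hp u hun huB
      have hle : u 1 + u 2 + u 3 + u 4 ≤ f s 1 + f s 2 + f s 3 + f s 4 := by
        have l1 := clampv_le_self (x := f s) (R := R) (i := 1) (part1 s hs 1)
        have l2 := clampv_le_self (x := f s) (R := R) (i := 2) (part1 s hs 2)
        have l3 := clampv_le_self (x := f s) (R := R) (i := 3) (part1 s hs 3)
        have l4 := clampv_le_self (x := f s) (R := R) (i := 4) (part1 s hs 4)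
        exact add_le_add (add_le_add (add_le_add l1 l2) l3) l4
      have hS' : rhs p u 1 + rhs p u 2 + rhs p u 3 + rhs p u 4
          ≤ Kc * (f s 1 + f s 2 + f s 3 + f s 4) := by
        calc rhs p u 1 + rhs p u 2 + rhs p u 3 + rhs p u 4
            ≤ Kc * (u 1 + u 2 + u 3 + u 4) := hsum
        _ ≤ Kc * (f s 1 + f s 2 + f s 3 + f s 4) := mul_le_mul_of_nonneg_left hle hKc0
      have hfsum : 0 ≤ f s 1 + f s 2 + f s 3 + f s 4 := by
        have := part1 s hs
        linarith [this 1, this 2, this 3, this 4]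
      have hEpos := (Real.exp_pos (-(Kc * s))).le
      have key : (rhs p u 1 + rhs p u 2 + rhs p u 3 + rhs p u 4) * Real.exp (-(Kc * s))
          + (f s 1 + f s 2 + f s 3 + f s 4) * (Real.exp (-(Kc * s)) * (-Kc))
          = ((rhs p u 1 + rhs p u 2 + rhs p u 3 + rhs p u 4)
            - Kc * (f s 1 + f s 2 + f s 3 + f s 4)) * Real.exp (-(Kc * s)) := by ring
      rw [key]
      exact mul_nonpos_of_nonpos_of_nonneg (by linarith) hEpos
  exact ⟨part1, part2, part3⟩

/-- invariance properties of nonnegative solutions of the true system. -/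
lemma invariance_true (p : ModelParams) (hp : p.Valid) {b : ℝ}
    (f : ℝ → Fin 5 → ℝ)
    (hf : ∀ t ∈ Icc (0:ℝ) b, HasDerivAt f (rhs p (f t)) t)
    (hnn : ∀ t ∈ Icc (0:ℝ) b, ∀ i, 0 ≤ f t i) :
    (∀ t ∈ Icc (0:ℝ) b, f t 0 ≤ max (f 0 0) (p.Lam/p.d)) ∧
    (∀ t ∈ Icc (0:ℝ) b, f t 1 + f t 2 + f t 3 + f t 4
      ≤ (f 0 1 + f 0 2 + f 0 3 + f 0 4) *
        Real.exp ((max (f 0 0) (p.Lam/p.d) * (p.ts*p.bs + p.tm*p.bm + p.tp*p.bp + p.tmp*p.bmp)) * t)) := by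
  have hval := hp
  obtain ⟨hLam, hdd, hds, hdm, hdp, hdmp, hbs, hbm, hbp, hbmp, hts, htm, htp, htmp,
    hes, hem, hep, hemp, hth, hal, haH, hbH, hc⟩ := hval
  set MB := max (f 0 0) (p.Lam/p.d) with hMBdef
  have hMB0 : 0 < MB := lt_of_lt_of_le (div_pos hLam hdd) (le_max_right _ _)
  have part2 : ∀ t ∈ Icc (0:ℝ) b, f t 0 ≤ MB := by
    apply barrier (g := fun s => rhs p (f s) 0)
      (fun s hs => (hasDerivAt_pi.1 (hf s hs)) 0) (le_max_left _ _)
    intro s hs hfs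
    have hLd : p.Lam ≤ p.d * MB := by
      rw [hMBdef]
      have h : p.Lam / p.d ≤ MB := le_max_right _ _
      calc p.Lam = p.d * (p.Lam / p.d) := by field_simp
      _ ≤ p.d * MB := mul_le_mul_of_nonneg_left h hdd.le
    have hterm : 0 ≤ f s 0 * (p.bs * f s 1 + p.bm * f s 2 + p.bp * f s 3 + p.bmp * f s 4) := by
      have h1 := hnn s hs 1
      have h2 := hnn s hs 2
      have h3 := hnn s hs 3
      have h4 := hnn s hs 4
      have hl : 0 ≤ p.bs * f s 1 + p.bm * f s 2 + p.bp * f s 3 + p.bmp * f s 4 := by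
        have a1 : 0 ≤ p.bs * f s 1 := mul_nonneg hbs h1
        have a2 : 0 ≤ p.bm * f s 2 := mul_nonneg hbm h2
        have a3 : 0 ≤ p.bp * f s 3 := mul_nonneg hbp h3
        have a4 : 0 ≤ p.bmp * f s 4 := mul_nonneg hbmp h4
        linarith
      exact mul_nonneg (hnn s hs 0) hl
    have e : rhs p (f s) 0 = p.Lam - p.d * f s 0
        - f s 0 * (p.bs * f s 1 + p.bm * f s 2 + p.bp * f s 3 + p.bmp * f s 4) := by
      simp [rhs]
    rw [e]
    have h : p.d * MB ≤ p.d * f s 0 := mul_le_mul_of_nonneg_left hfs hdd.le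
    linarith
  set Kc := MB * (p.ts*p.bs + p.tm*p.bm + p.tp*p.bp + p.tmp*p.bmp) with hKc
  have hKc0 : 0 ≤ Kc := by
    apply mul_nonneg hMB0.le
    have a1 : 0 ≤ p.ts*p.bs := mul_nonneg hts hbs
    have a2 : 0 ≤ p.tm*p.bm := mul_nonneg htm hbm
    have a3 : 0 ≤ p.tp*p.bp := mul_nonneg htp hbp
    have a4 : 0 ≤ p.tmp*p.bmp := mul_nonneg htmp hbmp
    linarith
  refine ⟨part2, ?_⟩
  have hbar := barrier
    (f := fun s => (f s 1 + f s 2 + f s 3 + f s 4) * Real.exp (-(Kc * s)))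
    (g := fun s => (rhs p (f s) 1 + rhs p (f s) 2 + rhs p (f s) 3 + rhs p (f s) 4)
        * Real.exp (-(Kc * s))
        + (f s 1 + f s 2 + f s 3 + f s 4) * (Real.exp (-(Kc * s)) * (-Kc)))
    (b := b) (M := f 0 1 + f 0 2 + f 0 3 + f 0 4) ?_ (by simp) ?_
  · intro t ht
    have h := hbar t ht
    have hee : Real.exp (-(Kc*t)) * Real.exp (Kc*t) = 1 := by
      rw [← Real.exp_add]; simp
    calc f t 1 + f t 2 + f t 3 + f t 4
        = ((f t 1 + f t 2 + f t 3 + f t 4) * Real.exp (-(Kc*t))) * Real.exp (Kc*t) := by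
          rw [mul_assoc, hee, mul_one]
    _ ≤ (f 0 1 + f 0 2 + f 0 3 + f 0 4) * Real.exp (Kc*t) :=
        mul_le_mul_of_nonneg_right h (Real.exp_pos _).le
  · intro s hs
    have hS : HasDerivAt (fun r => f r 1 + f r 2 + f r 3 + f r 4)
        (rhs p (f s) 1 + rhs p (f s) 2 + rhs p (f s) 3 + rhs p (f s) 4) s := by
      have h1 := (hasDerivAt_pi.1 (hf s hs)) 1
      have h2 := (hasDerivAt_pi.1 (hf s hs)) 2
      have h3 := (hasDerivAt_pi.1 (hf s hs)) 3
      have h4 := (hasDerivAt_pi.1 (hf s hs)) 4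
      exact ((h1.add h2).add h3).add h4
    have hE : HasDerivAt (fun r => Real.exp (-(Kc * r))) (Real.exp (-(Kc * s)) * (-Kc)) s := by
      have h : HasDerivAt (fun r : ℝ => -(Kc * r)) (-Kc) s := by
        have h' := ((hasDerivAt_id' s).const_mul Kc).neg; rwa [mul_one] at h'
      exact h.exp
    exact hS.mul hE
  · intro s hs _
    show (rhs p (f s) 1 + rhs p (f s) 2 + rhs p (f s) 3 + rhs p (f s) 4) * Real.exp (-(Kc * s))
        + (f s 1 + f s 2 + f s 3 + f s 4) * (Real.exp (-(Kc * s)) * (-Kc)) ≤ 0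
    have hsum := rhs_sum_le p hp (f s) (hnn s hs) (part2 s hs)
    rw [← hKc] at hsum
    have hEpos := (Real.exp_pos (-(Kc * s))).le
    have key : (rhs p (f s) 1 + rhs p (f s) 2 + rhs p (f s) 3 + rhs p (f s) 4)
        * Real.exp (-(Kc * s))
        + (f s 1 + f s 2 + f s 3 + f s 4) * (Real.exp (-(Kc * s)) * (-Kc))
        = ((rhs p (f s) 1 + rhs p (f s) 2 + rhs p (f s) 3 + rhs p (f s) 4)
          - Kc * (f s 1 + f s 2 + f s 3 + f s 4)) * Real.exp (-(Kc * s)) := by ring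
    rw [key]
    exact mul_nonpos_of_nonpos_of_nonneg (by linarith) hEpos

/-- uniqueness of bounded nonnegative solutions of the true system. -/
lemma unique_on (p : ModelParams) (hp : p.Valid) {R b : ℝ} (hR : 0 ≤ R)
    (f g : ℝ → Fin 5 → ℝ)
    (hf : ∀ t ∈ Icc (0:ℝ) b, HasDerivAt f (rhs p (f t)) t)
    (hfb : ∀ t ∈ Icc (0:ℝ) b, ∀ i, 0 ≤ f t i ∧ f t i ≤ R)
    (hg : ∀ t ∈ Icc (0:ℝ) b, HasDerivAt g (rhs p (g t)) t)
    (hgb : ∀ t ∈ Icc (0:ℝ) b, ∀ i, 0 ≤ g t i ∧ g t i ≤ R)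
    (h0 : f 0 = g 0) :
    ∀ t ∈ Icc (0:ℝ) b, f t = g t := by
  obtain ⟨K, hK⟩ := clamped_lipschitz p hp hR
  exact ODE_solution_unique (v := fun _ x => rhs p (clampv R x)) (fun _ => hK)
    (fun t ht => (hf t ht).continuousAt.continuousWithinAt)
    (fun t ht => by
      show HasDerivWithinAt f (rhs p (clampv R (f t))) (Ici t) t
      rw [clampv_eq_self (fun i => (hfb t (Ico_subset_Icc_self ht) i).1)
        (fun i => (hfb t (Ico_subset_Icc_self ht) i).2)]
      exact (hf t (Ico_subset_Icc_self ht)).hasDerivWithinAt)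
    (fun t ht => (hg t ht).continuousAt.continuousWithinAt)
    (fun t ht => by
      show HasDerivWithinAt g (rhs p (clampv R (g t))) (Ici t) t
      rw [clampv_eq_self (fun i => (hgb t (Ico_subset_Icc_self ht) i).1)
        (fun i => (hgb t (Ico_subset_Icc_self ht) i).2)]
      exact (hg t (Ico_subset_Icc_self ht)).hasDerivWithinAt)
    h0

end Aux

/-- For every nonnegative initial datum ω₀ ∈ ℝ⁵₊ there is a unique
global-in-time nonnegative solution of the within-host bacterial dynamics system
taking the value ω₀ at `t = 0`. -/
theorem exists_unique_global_nonneg_solution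
    (p : ModelParams) (hp : p.Valid) (ω : Fin 5 → ℝ) (hω : ∀ i, 0 ≤ ω i) :
    ∃ x : ℝ → Fin 5 → ℝ,
      (IsSolution p x ∧ x 0 = ω ∧ ∀ t : ℝ, 0 ≤ t → ∀ i, 0 ≤ x t i) ∧
      (∀ y : ℝ → Fin 5 → ℝ,
        IsSolution p y → y 0 = ω → (∀ t : ℝ, 0 ≤ t → ∀ i, 0 ≤ y t i) →
        ∀ t : ℝ, 0 ≤ t → y t = x t) := by
  have hval := hp
  obtain ⟨hLam, hdd, hds, hdm, hdp, hdmp, hbs, hbm, hbp, hbmp, hts, htm, htp, htmp,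
    hes, hem, hep, hemp, hth, hal, haH, hbH, hc⟩ := hval
  set MB := max (ω 0) (p.Lam / p.d) with hMBd
  set Kc := MB * (p.ts*p.bs + p.tm*p.bm + p.tp*p.bp + p.tmp*p.bmp) with hKcd
  set S0 := ω 1 + ω 2 + ω 3 + ω 4 with hS0d
  have hMB0 : 0 < MB := lt_of_lt_of_le (div_pos hLam hdd) (le_max_right _ _)
  have hKc0 : 0 ≤ Kc := by
    rw [hKcd]
    apply mul_nonneg hMB0.le
    have a1 : 0 ≤ p.ts*p.bs := mul_nonneg hts hbs
    have a2 : 0 ≤ p.tm*p.bm := mul_nonneg htm hbm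
    have a3 : 0 ≤ p.tp*p.bp := mul_nonneg htp hbp
    have a4 : 0 ≤ p.tmp*p.bmp := mul_nonneg htmp hbmp
    linarith
  have hS00 : 0 ≤ S0 := by rw [hS0d]; linarith [hω 1, hω 2, hω 3, hω 4]
  obtain ⟨ρ, hρdef⟩ : ∃ ρ : ℕ → ℝ, ∀ n : ℕ, ρ n = max MB (S0 * Real.exp (Kc * ((n:ℝ)+1))) :=
    ⟨fun n => max MB (S0 * Real.exp (Kc * ((n:ℝ)+1))), fun n => rfl⟩
  have hρ0 : ∀ n, 0 ≤ ρ n := fun n => by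
    rw [hρdef n]; exact le_trans hMB0.le (le_max_left _ _)
  have hρmono : ∀ m n : ℕ, m ≤ n → ρ m ≤ ρ n := by
    intro m n h
    rw [hρdef m, hρdef n]
    apply max_le_max le_rfl
    apply mul_le_mul_of_nonneg_left _ hS00
    apply Real.exp_le_exp.2
    apply mul_le_mul_of_nonneg_left _ hKc0
    have : (m:ℝ) ≤ n := Nat.cast_le.2 h
    linarith
  have hex : ∀ n : ℕ, ∃ f : ℝ → Fin 5 → ℝ, f 0 = ω ∧
      ∀ t ∈ Ioo (-1:ℝ) (((n:ℝ)+1)+1), HasDerivAt f (rhs p (clampv (ρ n) (f t))) t :=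
    fun n => exists_clamped_sol p hp (hρ0 n) ω ((n:ℝ)+1) (by positivity)
  choose F hF0 hFd using hex
  have hder : ∀ n : ℕ, ∀ t ∈ Icc (0:ℝ) ((n:ℝ)+1),
      HasDerivAt (F n) (rhs p (clampv (ρ n) (F n t))) t :=
    fun n t ht => hFd n t ⟨by linarith [ht.1], by linarith [ht.2]⟩
  have hP : ∀ n : ℕ, (∀ t ∈ Icc (0:ℝ) ((n:ℝ)+1), ∀ i, 0 ≤ F n t i) ∧
      (∀ t ∈ Icc (0:ℝ) ((n:ℝ)+1), F n t 0 ≤ MB) ∧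
      (∀ t ∈ Icc (0:ℝ) ((n:ℝ)+1), F n t 1 + F n t 2 + F n t 3 + F n t 4
        ≤ S0 * Real.exp (Kc * t)) := by
    intro n
    have h := invariance p hp (hρ0 n) (by positivity : (0:ℝ) ≤ (n:ℝ)+1) (F n) (hder n)
      (by rw [hF0 n]; exact hω)
      (by rw [hF0 n, hρdef n, ← hMBd]; exact le_max_left _ _)
    rw [hF0 n, ← hMBd, ← hKcd, ← hS0d] at h
    exact h
  have hbox : ∀ n : ℕ, ∀ t ∈ Icc (0:ℝ) ((n:ℝ)+1), ∀ i, 0 ≤ F n t i ∧ F n t i ≤ ρ n := by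
    intro n t ht i
    obtain ⟨P1, P2, P3⟩ := hP n
    have hexp : S0 * Real.exp (Kc * t) ≤ S0 * Real.exp (Kc * ((n:ℝ)+1)) :=
      mul_le_mul_of_nonneg_left (Real.exp_le_exp.2 (mul_le_mul_of_nonneg_left ht.2 hKc0)) hS00
    have hs := P3 t ht
    have h1 := P1 t ht 1
    have h2 := P1 t ht 2
    have h3 := P1 t ht 3
    have h4 := P1 t ht 4
    fin_cases i
    · show 0 ≤ F n t 0 ∧ F n t 0 ≤ ρ n
      refine ⟨P1 t ht 0, (P2 t ht).trans ?_⟩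
      rw [hρdef n]; exact le_max_left _ _
    · show 0 ≤ F n t 1 ∧ F n t 1 ≤ ρ n
      refine ⟨h1, ?_⟩
      rw [hρdef n]
      refine le_trans (le_trans (by linarith) hexp) (le_max_right _ _)
    · show 0 ≤ F n t 2 ∧ F n t 2 ≤ ρ n
      refine ⟨h2, ?_⟩
      rw [hρdef n]
      refine le_trans (le_trans (by linarith) hexp) (le_max_right _ _)
    · show 0 ≤ F n t 3 ∧ F n t 3 ≤ ρ n
      refine ⟨h3, ?_⟩
      rw [hρdef n]
      refine le_trans (le_trans (by linarith) hexp) (le_max_right _ _)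
    · show 0 ≤ F n t 4 ∧ F n t 4 ≤ ρ n
      refine ⟨h4, ?_⟩
      rw [hρdef n]
      refine le_trans (le_trans (by linarith) hexp) (le_max_right _ _)
  have hclamp : ∀ n : ℕ, ∀ t ∈ Icc (0:ℝ) ((n:ℝ)+1), clampv (ρ n) (F n t) = F n t :=
    fun n t ht => clampv_eq_self (fun i => (hbox n t ht i).1) (fun i => (hbox n t ht i).2)
  have htrue : ∀ n : ℕ, ∀ t ∈ Icc (0:ℝ) ((n:ℝ)+1), HasDerivAt (F n) (rhs p (F n t)) t :=
    fun n t ht => by have h := hder n t ht; rwa [hclamp n t ht] at h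
  have agree : ∀ m n : ℕ, m ≤ n → ∀ t ∈ Icc (0:ℝ) ((m:ℝ)+1), F m t = F n t := by
    intro m n hmn
    have hsub : Icc (0:ℝ) ((m:ℝ)+1) ⊆ Icc (0:ℝ) ((n:ℝ)+1) :=
      Icc_subset_Icc le_rfl (by have : (m:ℝ) ≤ n := Nat.cast_le.2 hmn; linarith)
    exact unique_on p hp (hρ0 n) (F m) (F n)
      (htrue m) (fun t ht i => ⟨(hbox m t ht i).1, (hbox m t ht i).2.trans (hρmono m n hmn)⟩)
      (fun t ht => htrue n t (hsub ht)) (fun t ht i => hbox n t (hsub ht) i)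
      (by rw [hF0 m, hF0 n])
  refine ⟨fun t => F ⌊t⌋₊ t, ⟨?_, ?_, ?_⟩, ?_⟩
  · -- IsSolution
    intro t ht i
    rcases eq_or_lt_of_le ht with h0 | hpos
    · have ht0 : t = 0 := h0.symm
      subst ht0
      have hEq : ∀ s ∈ Iio (1:ℝ), F ⌊s⌋₊ s = F 0 s := by
        intro s hs
        have h : ⌊s⌋₊ = 0 := Nat.floor_eq_zero.2 hs
        rw [h]
      have hF0d : HasDerivAt (F 0) (rhs p (F 0 0)) 0 := htrue 0 0 ⟨le_rfl, by norm_num⟩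
      have hvec : HasDerivAt (fun s => F ⌊s⌋₊ s) (rhs p (F 0 0)) 0 := by
        apply hF0d.congr_of_eventuallyEq
        filter_upwards [Iio_mem_nhds (by norm_num : (0:ℝ) < 1)] with s hs
        exact hEq s hs
      have hfz : ⌊(0:ℝ)⌋₊ = 0 := Nat.floor_zero
      have := hasDerivAt_pi.1 hvec i
      simpa [hfz] using this
    · have hfl1 : t < (⌊t⌋₊:ℝ)+1 := Nat.lt_floor_add_one t
      have hEq : ∀ s ∈ Ioo (0:ℝ) ((⌊t⌋₊:ℝ)+1), F ⌊s⌋₊ s = F ⌊t⌋₊ s := by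
        intro s hs
        have h1 : s ≤ (⌊s⌋₊:ℝ)+1 := (Nat.lt_floor_add_one s).le
        rcases le_or_gt ⌊s⌋₊ ⌊t⌋₊ with h | h
        · exact agree ⌊s⌋₊ ⌊t⌋₊ h s ⟨hs.1.le, h1⟩
        · exact (agree ⌊t⌋₊ ⌊s⌋₊ h.le s ⟨hs.1.le, hs.2.le⟩).symm
      have hFd' : HasDerivAt (F ⌊t⌋₊) (rhs p (F ⌊t⌋₊ t)) t := htrue ⌊t⌋₊ t ⟨ht, hfl1.le⟩
      have hvec : HasDerivAt (fun s => F ⌊s⌋₊ s) (rhs p (F ⌊t⌋₊ t)) t := by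
        apply hFd'.congr_of_eventuallyEq
        filter_upwards [Ioo_mem_nhds hpos hfl1] with s hs
        exact hEq s hs
      exact hasDerivAt_pi.1 hvec i
  · -- initial value
    show F ⌊(0:ℝ)⌋₊ 0 = ω
    rw [Nat.floor_zero, hF0 0]
  · -- nonnegativity
    intro t ht i
    exact (hP ⌊t⌋₊).1 t ⟨ht, (Nat.lt_floor_add_one t).le⟩ i
  · -- uniqueness
    intro y hy hy0 hynn t ht
    have htm : t ≤ (⌊t⌋₊:ℝ)+1 := (Nat.lt_floor_add_one t).le
    have hyder : ∀ s ∈ Icc (0:ℝ) ((⌊t⌋₊:ℝ)+1), HasDerivAt y (rhs p (y s)) s :=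
      fun s hs => hasDerivAt_pi.2 (fun i => hy s hs.1 i)
    have hynn' : ∀ s ∈ Icc (0:ℝ) ((⌊t⌋₊:ℝ)+1), ∀ i, 0 ≤ y s i := fun s hs i => hynn s hs.1 i
    obtain ⟨hyB, hyS⟩ := invariance_true p hp y hyder hynn'
    rw [hy0] at hyB hyS
    rw [← hMBd] at hyB hyS
    rw [← hKcd, ← hS0d] at hyS
    have hybox : ∀ s ∈ Icc (0:ℝ) ((⌊t⌋₊:ℝ)+1), ∀ i, 0 ≤ y s i ∧ y s i ≤ ρ ⌊t⌋₊ := by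
      intro s hs i
      have hexp : S0 * Real.exp (Kc * s) ≤ S0 * Real.exp (Kc * ((⌊t⌋₊:ℝ)+1)) :=
        mul_le_mul_of_nonneg_left (Real.exp_le_exp.2 (mul_le_mul_of_nonneg_left hs.2 hKc0)) hS00
      have hsum := hyS s hs
      have h1 := hynn' s hs 1
      have h2 := hynn' s hs 2
      have h3 := hynn' s hs 3
      have h4 := hynn' s hs 4
      fin_cases i
      · show 0 ≤ y s 0 ∧ y s 0 ≤ ρ ⌊t⌋₊
        refine ⟨hynn' s hs 0, (hyB s hs).trans ?_⟩
        rw [hρdef ⌊t⌋₊]; exact le_max_left _ _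
      · show 0 ≤ y s 1 ∧ y s 1 ≤ ρ ⌊t⌋₊
        refine ⟨h1, ?_⟩
        rw [hρdef ⌊t⌋₊]
        refine le_trans (le_trans (by linarith) hexp) (le_max_right _ _)
      · show 0 ≤ y s 2 ∧ y s 2 ≤ ρ ⌊t⌋₊
        refine ⟨h2, ?_⟩
        rw [hρdef ⌊t⌋₊]
        refine le_trans (le_trans (by linarith) hexp) (le_max_right _ _)
      · show 0 ≤ y s 3 ∧ y s 3 ≤ ρ ⌊t⌋₊
        refine ⟨h3, ?_⟩
        rw [hρdef ⌊t⌋₊]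
        refine le_trans (le_trans (by linarith) hexp) (le_max_right _ _)
      · show 0 ≤ y s 4 ∧ y s 4 ≤ ρ ⌊t⌋₊
        refine ⟨h4, ?_⟩
        rw [hρdef ⌊t⌋₊]
        refine le_trans (le_trans (by linarith) hexp) (le_max_right _ _)
    exact unique_on p hp (hρ0 ⌊t⌋₊) y (F ⌊t⌋₊) hyder hybox (htrue ⌊t⌋₊) (hbox ⌊t⌋₊)
      (by rw [hy0, hF0 ⌊t⌋₊]) t ⟨ht, htm⟩
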